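/- Let P = {P₁, …, Pₙ} be a finite family of pairwise disjoint compact convex sets in the plane, and suppose each unordered pair {Pᵢ, Pⱼ} is separated by at least one closed halfplane from a given finite multiset L of m halfplanes, each halfplane H ∈ L being disjoint from a designated set P_{i(H)} of the family. If m ≤ 9n - 9 and n ≥ 2, then there exists a halfplane H ∈ L containing at least n/18 of the sets P₁, …, Pₙ, while being disjoint from P_{i(H)}. -/

import Mathlib

/-- Each halfplane in the multiset is a closed halfplane `{p | a·p ≤ c}`. -/
def IsClosedHalfplane (H : Set (ℝ × ℝ)) : Prop :=
  ∃ a b c : ℝ, (a, b) ≠ (0, 0) ∧ H = {p : ℝ × ℝ | a * p.1 + b * p.2 ≤ c}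

/-- If a family of `n ≥ 2` pairwise disjoint compact convex plane sets is separated, pair by
pair, by a multiset of `m ≤ 9n - 9` closed halfplanes, each halfplane `H k` being disjoint from
its designated set `P (idx k)`, then some halfplane contains at least `n/18` of the sets while
being disjoint from its designated set. -/
theorem stmt_3 (n m : ℕ) (hn : 2 ≤ n) (hm : m ≤ 9 * n - 9)
    (P : Fin n → Set (ℝ × ℝ))
    (hcpt : ∀ i, IsCompact (P i)) (hconv : ∀ i, Convex ℝ (P i))
    (hdis : ∀ i j, i ≠ j → P i ∩ P j = ∅)
    (H : Fin m → Set (ℝ × ℝ)) (idx : Fin m → Fin n)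
    (hhalf : ∀ k, IsClosedHalfplane (H k))
    (hdisj : ∀ k, H k ∩ P (idx k) = ∅)
    (hsep : ∀ i j : Fin n, i < j →
      ∃ k : Fin m, (idx k = i ∧ P j ⊆ H k) ∨ (idx k = j ∧ P i ⊆ H k)) :
    ∃ k : Fin m, H k ∩ P (idx k) = ∅ ∧
      (n : ℝ) / 18 ≤ ({i : Fin n | P i ⊆ H k}.ncard : ℝ) := by
  classical
  have hm0 : 0 < m := by
    obtain ⟨k, _⟩ := hsep ⟨0, by omega⟩ ⟨1, by omega⟩ (by simp [Fin.lt_def])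
    exact k.pos
  -- choice function picking, for each ordered pair i < j, a witness (k, other)
  have key : ∀ i j : Fin n, i < j → ∃ q : Fin m × Fin n,
      P q.2 ⊆ H q.1 ∧ ((idx q.1 = i ∧ q.2 = j) ∨ (idx q.1 = j ∧ q.2 = i)) := by
    intro i j hij
    obtain ⟨k, hk⟩ := hsep i j hij
    rcases hk with ⟨h1, h2⟩ | ⟨h1, h2⟩
    · exact ⟨(k, j), h2, Or.inl ⟨h1, rfl⟩⟩
    · exact ⟨(k, i), h2, Or.inr ⟨h1, rfl⟩⟩
  choose q hq1 hq2 using key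
  have hrec : ∀ i j (h : i < j),
      i = min (idx (q i j h).1) (q i j h).2 ∧ j = max (idx (q i j h).1) (q i j h).2 := by
    intro i j h
    rcases hq2 i j h with ⟨h1, h2⟩ | ⟨h1, h2⟩ <;> rw [h1, h2]
    · exact ⟨(min_eq_left h.le).symm, (max_eq_right h.le).symm⟩
    · exact ⟨(min_eq_right h.le).symm, (max_eq_left h.le).symm⟩
  set T : Fin m → Finset (Fin n) := fun k => Finset.univ.filter fun i => P i ⊆ H k with hTdef
  obtain ⟨k0, -, hk0⟩ := Finset.exists_max_image (Finset.univ : Finset (Fin m))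
    (fun k => (T k).card) ⟨⟨0, hm0⟩, Finset.mem_univ _⟩
  set M := (T k0).card with hMdef
  set Target : Finset (Fin m × Fin n) := Finset.univ.filter (fun q => P q.2 ⊆ H q.1) with hTar
  set F : Fin n × Fin n → (Fin m × Fin n) × Bool := fun p =>
    if h : p.1 < p.2 then (q p.1 p.2 h, true)
    else if h' : p.2 < p.1 then (q p.2 p.1 h', false)
    else ((k0, p.1), true) with hF
  have hFlt : ∀ p : Fin n × Fin n, ∀ h : p.1 < p.2, F p = (q p.1 p.2 h, true) := by
    intro p h; simp only [hF]; rw [dif_pos h]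
  have hFgt : ∀ p : Fin n × Fin n, ∀ h : p.2 < p.1, F p = (q p.2 p.1 h, false) := by
    intro p h; simp only [hF]; rw [dif_neg (asymm h), dif_pos h]
  have hmemF : ∀ p ∈ (Finset.univ.offDiag : Finset (Fin n × Fin n)),
      F p ∈ Target ×ˢ (Finset.univ : Finset Bool) := by
    intro p hp
    have hne : p.1 ≠ p.2 := (Finset.mem_offDiag.mp hp).2.2
    rcases lt_or_gt_of_ne hne with h | h
    · rw [hFlt p h, Finset.mem_product]
      exact ⟨Finset.mem_filter.mpr ⟨Finset.mem_univ _, hq1 _ _ h⟩, Finset.mem_univ _⟩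
    · rw [hFgt p h, Finset.mem_product]
      exact ⟨Finset.mem_filter.mpr ⟨Finset.mem_univ _, hq1 _ _ h⟩, Finset.mem_univ _⟩
  have hinj : Set.InjOn F (Finset.univ.offDiag : Finset (Fin n × Fin n)) := by
    intro p hp p' hp' hFF
    have hne : p.1 ≠ p.2 := (Finset.mem_offDiag.mp (Finset.mem_coe.mp hp)).2.2
    have hne' : p'.1 ≠ p'.2 := (Finset.mem_offDiag.mp (Finset.mem_coe.mp hp')).2.2
    rcases lt_or_gt_of_ne hne with h | h <;> rcases lt_or_gt_of_ne hne' with h' | h'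
    · rw [hFlt p h, hFlt p' h'] at hFF
      have hq : q p.1 p.2 h = q p'.1 p'.2 h' := (Prod.mk.injEq _ _ _ _).mp hFF |>.1
      obtain ⟨e1, e2⟩ := hrec p.1 p.2 h
      obtain ⟨e1', e2'⟩ := hrec p'.1 p'.2 h'
      rw [hq] at e1 e2
      exact Prod.ext (e1.trans e1'.symm) (e2.trans e2'.symm)
    · rw [hFlt p h, hFgt p' h'] at hFF
      simp at hFF
    · rw [hFgt p h, hFlt p' h'] at hFF
      simp at hFF
    · rw [hFgt p h, hFgt p' h'] at hFF
      have hq : q p.2 p.1 h = q p'.2 p'.1 h' := (Prod.mk.injEq _ _ _ _).mp hFF |>.1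
      obtain ⟨e1, e2⟩ := hrec p.2 p.1 h
      obtain ⟨e1', e2'⟩ := hrec p'.2 p'.1 h'
      rw [hq] at e1 e2
      exact Prod.ext (e2.trans e2'.symm) (e1.trans e1'.symm)
  have hcard1 : (Finset.univ.offDiag : Finset (Fin n × Fin n)).card ≤
      (Target ×ˢ (Finset.univ : Finset Bool)).card :=
    Finset.card_le_card_of_injOn F hmemF hinj
  have hod : (Finset.univ.offDiag : Finset (Fin n × Fin n)).card = n * n - n := by
    rw [Finset.offDiag_card]; simp
  have hprod : (Target ×ˢ (Finset.univ : Finset Bool)).card = Target.card * 2 := by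
    rw [Finset.card_product]; simp
  have hTar_card : Target.card = ∑ k : Fin m, (Target.filter fun q => q.1 = k).card :=
    Finset.card_eq_sum_card_fiberwise (fun q _ => Finset.mem_univ q.1)
  have hfib : ∀ k : Fin m, (Target.filter fun q => q.1 = k).card ≤ M := by
    intro k
    have h1 : (Target.filter fun q => q.1 = k).card ≤ (T k).card := by
      apply Finset.card_le_card_of_injOn (fun q => q.2)
      · intro a ha
        simp only [hTar, hTdef, Finset.mem_coe, Finset.mem_filter, Finset.mem_univ, true_and] at ha ⊢
        rw [← ha.2]; exact ha.1
      · intro a ha b hb hab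
        simp only [hTar, Finset.coe_filter, Set.mem_setOf_eq] at ha hb
        exact Prod.ext (ha.2.trans hb.2.symm) hab
    exact h1.trans (hk0 k (Finset.mem_univ k))
  have hTM : Target.card ≤ m * M := by
    rw [hTar_card]
    calc ∑ k : Fin m, (Target.filter fun q => q.1 = k).card
        ≤ Finset.univ.card • M := Finset.sum_le_card_nsmul _ _ M (fun k _ => hfib k)
      _ = m * M := by simp [mul_comm]
  have hmain : n ≤ 18 * M := by
    have e : n * (n - 1) = n * n - n := by
      obtain ⟨k, rfl⟩ : ∃ k, n = k + 1 := ⟨n - 1, by omega⟩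
      simp [Nat.mul_succ]
    have h1 : n * (n - 1) ≤ 2 * (m * M) := by
      have hx : n * n - n ≤ Target.card * 2 := by
        have := hcard1; rw [hod, hprod] at this; exact this
      have h2' : Target.card * 2 ≤ m * M * 2 := Nat.mul_le_mul_right 2 hTM
      rw [e, mul_comm 2]
      exact hx.trans h2'
    have h2 : m ≤ 9 * (n - 1) := by omega
    have h3 : n * (n - 1) ≤ 2 * (9 * (n - 1) * M) :=
      h1.trans (Nat.mul_le_mul (le_refl 2) (Nat.mul_le_mul h2 (le_refl M)))
    have h4 : n * (n - 1) ≤ (18 * M) * (n - 1) := by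
      calc n * (n - 1) ≤ 2 * (9 * (n - 1) * M) := h3
        _ = (18 * M) * (n - 1) := by ring
    exact Nat.le_of_mul_le_mul_right h4 (by omega)
  refine ⟨k0, hdisj k0, ?_⟩
  have hset : {i : Fin n | P i ⊆ H k0}.ncard = M := by
    rw [Set.ncard_eq_toFinset_card']
    simp [hTdef, hMdef, Set.toFinset_setOf]
  rw [hset, div_le_iff₀ (by norm_num)]
  calc (n : ℝ) ≤ 18 * M := by exact_mod_cast hmain
    _ = (M : ℝ) * 18 := by ring
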